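/- Let B be a finite left brace with |B| > 1 and Soc(B) = {0}, and let X ⊆ B be a transitive cycle base of B, regarded as a cycle set with operation x·y := λ_x^{-1}(y). Then the following are equivalent: (1) X is a simple cycle set; (2) every ideal I ≠ {0} of B acts transitively on X; (3) B has exactly one minimal non-trivial ideal I (an ideal I ≠ {0} such that no ideal J with {0} ⊊ J ⊊ I exists), and this I acts transitively on X. -/
import Mathlib

universe u

/-- A left brace structure on an additive abelian group `A`: a group operation `mul`
(with identity `one` and inverses `inv`) satisfying `a ∘ (b + c) + a = a ∘ b + a ∘ c`. -/
structure LeftBrace (A : Type*) [AddCommGroup A] where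
  mul : A → A → A
  one : A
  inv : A → A
  mul_assoc' : ∀ a b c, mul (mul a b) c = mul a (mul b c)
  one_mul' : ∀ a, mul one a = a
  mul_one' : ∀ a, mul a one = a
  inv_mul' : ∀ a, mul (inv a) a = one
  mul_inv' : ∀ a, mul a (inv a) = one
  compat : ∀ a b c, mul a (b + c) + a = mul a b + mul a c

namespace LeftBrace

variable {A : Type*} [AddCommGroup A]

/-- The map `λ_a : b ↦ -a + a ∘ b`. -/
def lam (B : LeftBrace A) (a b : A) : A := -a + B.mul a b

/-- The cycle set operation `x · y := λ_x⁻¹ (y)` associated to a left brace. -/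
noncomputable def cop (B : LeftBrace A) (x y : A) : A :=
  @Function.invFun A A ⟨0⟩ (B.lam x) y

/-- An ideal of a left brace: a normal subgroup of `(A, ∘)` invariant under all `λ_a`. -/
def IsIdeal (B : LeftBrace A) (I : Set A) : Prop :=
  B.one ∈ I ∧ (∀ a ∈ I, ∀ b ∈ I, B.mul a b ∈ I) ∧ (∀ a ∈ I, B.inv a ∈ I) ∧
    (∀ g : A, ∀ a ∈ I, B.mul (B.mul g a) (B.inv g) ∈ I) ∧
    (∀ g : A, ∀ a ∈ I, B.lam g a ∈ I)

end LeftBrace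

/-- A cycle set structure `op` on `X` is simple if `|X| > 1` and every surjective
cycle set homomorphism from `X` onto a cycle set `Y` with `|Y| > 1` is bijective. -/
def IsSimpleCycleSet {X : Type u} (op : X → X → X) : Prop :=
  1 < Nat.card X ∧
    ∀ (Y : Type u) (opY : Y → Y → Y),
      (∀ y, Function.Bijective (opY y)) →
      (∀ a b c, opY (opY a b) (opY a c) = opY (opY b a) (opY b c)) →
      ∀ f : X → Y, Function.Surjective f →
        (∀ a b, f (op a b) = opY (f a) (f b)) →
        1 < Nat.card Y → Function.Bijective f

namespace LeftBrace

variable {A : Type*} [AddCommGroup A]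
variable (B : LeftBrace A)

lemma mul_zero (a : A) : B.mul a 0 = a := by
  have h := B.compat a 0 0
  rw [add_zero] at h
  exact (add_left_cancel h).symm

lemma one_eq : B.one = 0 := by
  have h1 := B.mul_zero B.one
  have h2 := B.one_mul' 0
  rw [h2] at h1; exact h1.symm

lemma zero_mul (a : A) : B.mul 0 a = a := by
  have := B.one_mul' a; rwa [B.one_eq] at this

lemma inv_eq_of_mul {a b : A} (h : B.mul a b = B.one) : B.inv a = b := by
  have h2 : B.mul (B.inv a) (B.mul a b) = B.mul (B.inv a) B.one := by rw [h]
  rw [← B.mul_assoc', B.inv_mul', B.one_mul', B.mul_one'] at h2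
  exact h2.symm

lemma inv_inv (a : A) : B.inv (B.inv a) = a := B.inv_eq_of_mul (B.inv_mul' a)

lemma inv_one : B.inv B.one = B.one := B.inv_eq_of_mul (B.one_mul' B.one)

lemma inv_zero : B.inv 0 = 0 := by have := B.inv_one; rwa [B.one_eq] at this

lemma mul_inv_rev (a b : A) : B.inv (B.mul a b) = B.mul (B.inv b) (B.inv a) := by
  apply B.inv_eq_of_mul
  rw [B.mul_assoc', ← B.mul_assoc' b, B.mul_inv', B.one_mul', B.mul_inv']

lemma mul_left_cancel {a b c : A} (h : B.mul a b = B.mul a c) : b = c := by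
  have : B.mul (B.inv a) (B.mul a b) = B.mul (B.inv a) (B.mul a c) := by rw [h]
  rwa [← B.mul_assoc', ← B.mul_assoc', B.inv_mul', B.one_mul', B.one_mul'] at this

lemma lam_add (a b c : A) : B.lam a (b + c) = B.lam a b + B.lam a c := by
  have h := B.compat a b c
  simp only [lam]
  rw [show B.mul a (b+c) = B.mul a b + B.mul a c - a from by rw [← h]; abel]
  abel

lemma lam_zero (a : A) : B.lam a 0 = 0 := by
  simp [lam, B.mul_zero]

lemma lam_neg (a b : A) : B.lam a (-b) = -B.lam a b := by
  have h := B.lam_add a b (-b)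
  rw [add_neg_cancel, B.lam_zero] at h
  have := h.symm
  rw [add_eq_zero_iff_neg_eq] at this
  exact this.symm

lemma lam_zero_left (b : A) : B.lam 0 b = b := by simp [lam, B.zero_mul]

lemma mul_eq (a b : A) : B.mul a b = a + B.lam a b := by simp [lam]

lemma mul_add' (a b c : A) : B.mul a (b + c) = B.mul a b + B.mul a c - a :=
  eq_sub_of_add_eq (B.compat a b c)

lemma lam_mul (a b c : A) : B.lam (B.mul a b) c = B.lam a (B.lam b c) := by
  have hneg : B.mul a (-b) = a + a - B.mul a b := by
    have h := B.compat a b (-b)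
    rw [add_neg_cancel, B.mul_zero] at h
    rw [eq_sub_iff_add_eq, add_comm]
    exact h.symm
  simp only [lam]
  rw [B.mul_assoc', B.mul_add', hneg]
  abel

lemma lam_one_left (b : A) : B.lam B.one b = b := by rw [B.one_eq]; exact B.lam_zero_left b

lemma lam_inv_lam (a b : A) : B.lam (B.inv a) (B.lam a b) = b := by
  rw [← B.lam_mul, B.inv_mul', B.lam_one_left]

lemma lam_lam_inv (a b : A) : B.lam a (B.lam (B.inv a) b) = b := by
  rw [← B.lam_mul, B.mul_inv', B.lam_one_left]

lemma lam_inj (a : A) : Function.Injective (B.lam a) := by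
  intro x y h
  have := congrArg (B.lam (B.inv a)) h
  rwa [B.lam_inv_lam, B.lam_inv_lam] at this

lemma lam_inv_self (a : A) : B.lam a (B.inv a) = -a := by
  simp [lam, B.mul_inv', B.one_eq]

lemma add_eq_mul (a b : A) : a + b = B.mul a (B.lam (B.inv a) b) := by
  rw [B.mul_eq, B.lam_lam_inv]

lemma mul_comm_lam (a b : A) :
    B.mul a b = B.mul (B.lam a b) (B.lam (B.inv (B.lam a b)) a) := by
  rw [← B.add_eq_mul, B.mul_eq, add_comm]

lemma lam_decomp (g a b : A) :
    B.lam g (B.mul a b)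
      = B.mul (B.lam g a) (B.lam (B.mul (B.mul (B.inv (B.lam g a)) g) a) b) := by
  rw [B.mul_eq (B.lam g a), B.lam_mul, B.lam_mul, B.lam_lam_inv, ← B.lam_mul,
    B.mul_eq a b, B.lam_add, B.lam_mul]

lemma cop_eq (x y : A) : B.cop x y = B.lam (B.inv x) y := by
  have h : B.lam x (B.lam (B.inv x) y) = y := B.lam_lam_inv x y
  have hs : ∃ b, B.lam x b = y := ⟨_, h⟩
  have : B.lam x (@Function.invFun A A ⟨0⟩ (B.lam x) y) = y := Function.invFun_eq hs
  exact B.lam_inj x (by rw [cop] at *; rw [this, h])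

/-- Powers in the multiplicative group. -/
def pow (a : A) : ℕ → A
  | 0 => B.one
  | n+1 => B.mul a (pow a n)

lemma pow_zero (a : A) : B.pow a 0 = B.one := rfl

lemma pow_succ (a : A) (n : ℕ) : B.pow a (n+1) = B.mul a (B.pow a n) := rfl

lemma pow_add (a : A) (m n : ℕ) : B.pow a (m + n) = B.mul (B.pow a m) (B.pow a n) := by
  induction m with
  | zero => rw [Nat.zero_add, B.pow_zero, B.one_mul']
  | succ k ih => rw [Nat.succ_add, B.pow_succ, B.pow_succ, ih, B.mul_assoc']

lemma exists_pow_one [Finite A] (a : A) : ∃ n, 0 < n ∧ B.pow a n = B.one := by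
  obtain ⟨i, j, hij, h⟩ := Finite.exists_ne_map_eq_of_infinite (B.pow a)
  rcases lt_or_gt_of_ne hij with hlt | hlt
  · refine ⟨j - i, by omega, ?_⟩
    have : B.pow a (i + (j - i)) = B.pow a i := by rw [show i + (j-i) = j by omega, h]
    rw [B.pow_add] at this
    have h2 : B.mul (B.pow a i) (B.pow a (j-i)) = B.mul (B.pow a i) B.one := by
      rw [this, B.mul_one']
    exact B.mul_left_cancel h2
  · refine ⟨i - j, by omega, ?_⟩
    have : B.pow a (j + (i - j)) = B.pow a j := by rw [show j + (i-j) = i by omega, ← h]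
    rw [B.pow_add] at this
    have h2 : B.mul (B.pow a j) (B.pow a (i-j)) = B.mul (B.pow a j) B.one := by
      rw [this, B.mul_one']
    exact B.mul_left_cancel h2

lemma inv_eq_pow [Finite A] (a : A) : ∃ n, B.inv a = B.pow a n := by
  obtain ⟨n, hn, hpow⟩ := B.exists_pow_one a
  refine ⟨n - 1, B.inv_eq_of_mul ?_⟩
  have : B.pow a (1 + (n-1)) = B.one := by rw [show 1 + (n-1) = n by omega, hpow]
  rw [B.pow_add, B.pow_succ, B.pow_zero, B.mul_one'] at this
  exact this

/-- The multiplicative subgroup generated by a set. -/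
inductive Gen (X : Set A) : A → Prop
  | base : ∀ x ∈ X, Gen X x
  | one : Gen X B.one
  | mul : ∀ {a b}, Gen X a → Gen X b → Gen X (B.mul a b)
  | inv : ∀ {a}, Gen X a → Gen X (B.inv a)

/-- If `X` is λ-closed and additively generates `A`, then `X` multiplicatively
generates `A`. -/
lemma gen_all [Finite A] (X : Set A)
    (hclosed : ∀ a : A, ∀ x ∈ X, B.lam a x ∈ X)
    (hgen : AddSubgroup.closure X = ⊤) : ∀ a : A, B.Gen X a := by
  -- Step 1 : the set of generated elements is λ-invariant
  have hlaminv : ∀ a : A, B.Gen X a → ∀ g : A, B.Gen X (B.lam g a) := by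
    intro a ha
    induction ha with
    | base x hx => exact fun g => Gen.base _ (hclosed g x hx)
    | one => intro g; rw [B.one_eq, B.lam_zero]; rw [← B.one_eq]; exact Gen.one
    | mul ha hb iha ihb =>
      intro g
      rw [B.lam_decomp]
      exact Gen.mul (iha g) (ihb _)
    | inv ha iha =>
      rename_i a'
      obtain ⟨n, hn⟩ := B.inv_eq_pow a'
      rw [hn]
      clear hn
      induction n with
      | zero =>
        intro g
        have h0 : B.lam g (B.pow a' 0) = B.one := by
          rw [B.pow_zero, B.one_eq, B.lam_zero]
        rw [h0]; exact Gen.one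
      | succ k ihk =>
        intro g
        rw [B.pow_succ, B.lam_decomp]
        exact Gen.mul (iha g) (ihk _)
  -- Step 2 : the generated set is an additive subgroup
  let K : AddSubgroup A :=
    { carrier := {a | B.Gen X a}
      zero_mem' := B.one_eq ▸ Gen.one
      add_mem' := by
        intro a b ha hb
        rw [B.add_eq_mul]
        exact Gen.mul ha (hlaminv _ hb _)
      neg_mem' := by
        intro a ha
        have h : B.lam a (B.inv a) = -a := B.lam_inv_self a
        rw [← h]
        exact hlaminv _ (Gen.inv ha) a }
  have hle : AddSubgroup.closure X ≤ K := (AddSubgroup.closure_le K).mpr (fun x hx => Gen.base x hx)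
  intro a
  exact hle (hgen ▸ AddSubgroup.mem_top a)

lemma lam_fix_zero (hsoc : {a : A | ∀ b, a + b = B.mul a b} = {0})
    (X : Set A) (hgen : AddSubgroup.closure X = ⊤)
    (a : A) (hfix : ∀ x ∈ X, B.lam a x = x) : a = 0 := by
  let F : AddSubgroup A :=
    { carrier := {b | B.lam a b = b}
      zero_mem' := B.lam_zero a
      add_mem' := by
        intro b c hb hc
        show B.lam a (b + c) = b + c
        rw [B.lam_add, hb, hc]
      neg_mem' := by
        intro b hb
        show B.lam a (-b) = -b
        rw [B.lam_neg, hb] }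
  have hle : AddSubgroup.closure X ≤ F := (AddSubgroup.closure_le F).mpr (fun x hx => hfix x hx)
  have hall : ∀ b, B.lam a b = b := fun b => hle (hgen ▸ AddSubgroup.mem_top b)
  have hmem : a ∈ {a : A | ∀ b, a + b = B.mul a b} := by
    intro b
    rw [B.mul_eq, hall]
  rw [hsoc] at hmem
  exact hmem

section Ideal

variable {B} {I : Set A} (hI : B.IsIdeal I)
include hI

lemma ideal_zero : (0 : A) ∈ I := B.one_eq ▸ hI.1

lemma ideal_add {a b : A} (ha : a ∈ I) (hb : b ∈ I) : a + b ∈ I := by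
  rw [B.add_eq_mul]
  exact hI.2.1 a ha _ (hI.2.2.2.2 _ b hb)

lemma ideal_neg {a : A} (ha : a ∈ I) : -a ∈ I := by
  have h : B.lam a (B.inv a) = -a := B.lam_inv_self a
  rw [← h]
  exact hI.2.2.2.2 _ _ (hI.2.2.1 a ha)

lemma ideal_star {a : A} (ha : a ∈ I) (b : A) : B.lam a b - b ∈ I := by
  have hw : B.mul (B.mul (B.inv b) a) b ∈ I := by
    have := hI.2.2.2.1 (B.inv b) a ha
    rwa [B.inv_inv] at this
  have hlw : B.lam b (B.mul (B.mul (B.inv b) a) b) ∈ I := hI.2.2.2.2 b _ hw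
  have hcomp : B.lam b (B.mul (B.mul (B.inv b) a) b) = -b + B.mul a b := by
    rw [B.mul_assoc', B.mul_eq (B.inv b), B.lam_add, B.lam_inv_self, ← B.lam_mul,
      B.mul_inv', B.lam_one_left]
  rw [hcomp] at hlw
  have := ideal_add hI hlw (ideal_neg hI ha)
  have heq : -b + B.mul a b + -a = B.lam a b - b := by rw [B.mul_eq]; abel
  rwa [heq] at this

end Ideal

lemma isIdeal_univ : B.IsIdeal (Set.univ : Set A) := by
  refine ⟨trivial, ?_, ?_, ?_, ?_⟩ <;> intros <;> trivial

lemma isIdeal_inter {B : LeftBrace A} {I J : Set A} (hI : B.IsIdeal I) (hJ : B.IsIdeal J) :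
    B.IsIdeal (I ∩ J) := by
  refine ⟨⟨hI.1, hJ.1⟩, ?_, ?_, ?_, ?_⟩
  · exact fun a ha b hb => ⟨hI.2.1 a ha.1 b hb.1, hJ.2.1 a ha.2 b hb.2⟩
  · exact fun a ha => ⟨hI.2.2.1 a ha.1, hJ.2.2.1 a ha.2⟩
  · exact fun g a ha => ⟨hI.2.2.2.1 g a ha.1, hJ.2.2.2.1 g a ha.2⟩
  · exact fun g a ha => ⟨hI.2.2.2.2 g a ha.1, hJ.2.2.2.2 g a ha.2⟩


end LeftBrace

namespace LeftBrace

set_option linter.unusedSectionVars false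
set_option linter.dupNamespace false

section Main

variable {A : Type u} [AddCommGroup A] [Finite A]

/-- The λ-action restricted to `X`. -/
def lamX (B : LeftBrace A) (X : Set A) (hclosed : ∀ a : A, ∀ x ∈ X, B.lam a x ∈ X)
    (a : A) (u : X) : X := ⟨B.lam a u.1, hclosed a u.1 u.2⟩

/-- (2) → (1) : if every nonzero ideal acts transitively on `X`, then `X` is simple. -/
lemma simple_of_trans (B : LeftBrace A)
    (hsoc : {a : A | ∀ b, a + b = B.mul a b} = {0})
    (X : Set A) (hclosed : ∀ a : A, ∀ x ∈ X, B.lam a x ∈ X)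
    (hgen : AddSubgroup.closure X = ⊤)
    (opX : X → X → X)
    (hopX : ∀ x y : X, ((opX x y : X) : A) = B.cop (x : A) (y : A))
    (hcard : 1 < Nat.card A)
    (htr : ∀ I : Set A, B.IsIdeal I → I ≠ {0} →
      ∀ x ∈ X, ∀ y ∈ X, ∃ a ∈ I, B.lam a x = y) :
    IsSimpleCycleSet opX := by
  classical
  set L : A → X → X := lamX B X hclosed with hLdef
  have Lval : ∀ (a : A) (u : X), (L a u : A) = B.lam a u.1 := fun a u => rfl
  have Lmul : ∀ (a b : A) (u : X), L (B.mul a b) u = L a (L b u) :=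
    fun a b u => Subtype.ext (B.lam_mul a b u.1)
  have Lone : ∀ u : X, L B.one u = u := fun u => Subtype.ext (B.lam_one_left u.1)
  have Linvlam : ∀ (a : A) (u : X), L (B.inv a) (L a u) = u :=
    fun a u => Subtype.ext (B.lam_inv_lam a u.1)
  have Llaminv : ∀ (a : A) (u : X), L a (L (B.inv a) u) = u :=
    fun a u => Subtype.ext (B.lam_lam_inv a u.1)
  have LopX : ∀ u v : X, opX u v = L (B.inv u.1) v :=
    fun u v => Subtype.ext (by rw [hopX, B.cop_eq]; rfl)
  constructor
  · -- 1 < |X|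
    by_contra hle
    push_neg at hle
    have hss : Subsingleton X := Finite.card_le_one_iff_subsingleton.mp hle
    have hzero : ∀ a : A, a = 0 := by
      intro a
      refine B.lam_fix_zero hsoc X hgen a (fun x hx => ?_)
      have := hss.elim ⟨B.lam a x, hclosed a x hx⟩ ⟨x, hx⟩
      exact congrArg Subtype.val this
    have : Subsingleton A := ⟨fun a b => by rw [hzero a, hzero b]⟩
    have := Finite.card_le_one_iff_subsingleton.mpr this
    omega
  intro Y opY hbij hlaw f hsurj hhom hY
  refine ⟨?_, hsurj⟩
  have hfinY : Finite Y := Finite.of_surjective f hsurj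
  have hGen := B.gen_all X hclosed hgen
  -- the descent property: f respects fibers under every λ_a
  have hD : ∀ a : A, ∀ u v : X, f u = f v → f (L a u) = f (L a v) := by
    have hDinv : ∀ a : A, (∀ u v : X, f u = f v → f (L a u) = f (L a v)) →
        ∀ u v : X, f u = f v → f (L (B.inv a) u) = f (L (B.inv a) v) := by
      intro a iha u v huv
      have hψ : ∀ w : X, f (L a (Function.surjInv hsurj (f w))) = f (L a w) :=
        fun w => iha _ _ (Function.surjInv_eq hsurj (f w))
      set ψ : Y → Y := fun y => f (L a (Function.surjInv hsurj y)) with hψdef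
      have hψs : Function.Surjective ψ := by
        intro y
        obtain ⟨w, rfl⟩ := hsurj y
        exact ⟨f (L (B.inv a) w), by show f _ = _; rw [hψ, Llaminv]⟩
      have hψi : Function.Injective ψ := Finite.injective_iff_surjective.mpr hψs
      apply hψi
      show f _ = f _
      rw [hψ, hψ, Llaminv, Llaminv]
      exact huv
    have key : ∀ a : A, B.Gen X a → ∀ u v : X, f u = f v → f (L a u) = f (L a v) := by
      intro a ha
      induction ha with
      | one => intro u v huv; rw [Lone, Lone]; exact huv
      | mul ha hb iha ihb =>
        intro u v huv
        rw [Lmul, Lmul]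
        exact iha _ _ (ihb _ _ huv)
      | inv ha iha => exact hDinv _ iha
      | base x hx =>
        have hdinv : ∀ u v : X, f u = f v →
            f (L (B.inv x) u) = f (L (B.inv x) v) := by
          intro u v huv
          have h1 : L (B.inv x) u = opX ⟨x, hx⟩ u := (LopX ⟨x, hx⟩ u).symm
          have h2 : L (B.inv x) v = opX ⟨x, hx⟩ v := (LopX ⟨x, hx⟩ v).symm
          rw [h1, h2, hhom, hhom, huv]
        have := hDinv (B.inv x) hdinv
        simpa only [B.inv_inv] using this
    exact fun a => key a (hGen a)
  -- cancellation of f along λ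
  have hDc : ∀ a : A, ∀ u v : X, f (L a u) = f (L a v) → f u = f v := by
    intro a u v h
    have := hD (B.inv a) _ _ h
    rwa [Linvlam, Linvlam] at this
  -- f-equal points of X induce the same descended λ-map
  have hCP : ∀ p q : X, f p = f q → ∀ u : X, f (L p.1 u) = f (L q.1 u) := by
    intro p q hpq u
    have hop : ∀ w : X, f (L (B.inv p.1) w) = f (L (B.inv q.1) w) := by
      intro w
      rw [show L (B.inv p.1) w = opX p w from (LopX p w).symm,
        show L (B.inv q.1) w = opX q w from (LopX q w).symm, hhom, hhom, hpq]
    apply hDc (B.inv q.1)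
    rw [Linvlam]
    calc f (L (B.inv q.1) (L p.1 u)) = f (L (B.inv p.1) (L p.1 u)) := (hop _).symm
      _ = f u := by rw [Linvlam]
  -- the kernel ideal
  set I : Set A := {a : A | ∀ u : X, f (L a u) = f u} with hIdef
  have hIone : B.one ∈ I := fun u => by rw [Lone]
  have hImul : ∀ a ∈ I, ∀ b ∈ I, B.mul a b ∈ I := by
    intro a ha b hb u
    rw [Lmul]
    exact (ha _).trans (hb _)
  have hIinv : ∀ a ∈ I, B.inv a ∈ I := by
    intro a ha u
    have := ha (L (B.inv a) u)
    rw [Llaminv] at this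
    exact this.symm
  have hInormal : ∀ g : A, ∀ a ∈ I, B.mul (B.mul g a) (B.inv g) ∈ I := by
    intro g a ha u
    rw [Lmul, Lmul]
    have h1 : f (L a (L (B.inv g) u)) = f (L (B.inv g) u) := ha _
    have := hD g _ _ h1
    rwa [Llaminv] at this
  have hIlam : ∀ g : A, ∀ a ∈ I, B.lam g a ∈ I := by
    -- base: λ_{y⁻¹}(k) ∈ I for y ∈ X
    have hbase : ∀ k ∈ I, ∀ y : X, B.lam (B.inv y.1) k ∈ I := by
      intro k hk y
      set x : X := L (B.inv k) y with hxdef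
      have hyx : L k x = y := Llaminv k y
      set m : A := B.lam (B.inv y.1) k with hmdef
      have hkey : B.mul k x.1 = B.mul y.1 m := by
        have h := B.mul_comm_lam k x.1
        have hcar : B.lam k x.1 = y.1 := congrArg Subtype.val hyx
        rw [hcar] at h
        exact h
      have hfxy : f x = f y := by
        have := hk x
        rw [hyx] at this
        exact this.symm
      intro u
      have h1 : f (L y.1 (L m u)) = f (L x.1 u) := by
        rw [← Lmul, ← hkey, Lmul]
        exact hk _
      have h2 : f (L x.1 u) = f (L y.1 u) := hCP x y hfxy u
      exact hDc y.1 _ _ (h1.trans h2)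
    -- R := {g | λ_g(I) ⊆ I} is closed under the group operations
    have hRinv : ∀ g : A, (∀ k ∈ I, B.lam g k ∈ I) → ∀ k ∈ I, B.lam (B.inv g) k ∈ I := by
      intro g hg k hk
      have hIfin : Finite I := Set.Finite.to_subtype (Set.toFinite I)
      set e : I → I := fun k => ⟨B.lam g k.1, hg k.1 k.2⟩ with hedef
      have hei : Function.Injective e := by
        intro k1 k2 h
        exact Subtype.ext (B.lam_inj g (congrArg Subtype.val h))
      have hes : Function.Surjective e := Finite.injective_iff_surjective.mp hei
      obtain ⟨b, hb⟩ := hes ⟨k, hk⟩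
      have : B.lam g b.1 = k := congrArg Subtype.val hb
      rw [← this, B.lam_inv_lam]
      exact b.2
    have hR : ∀ g : A, B.Gen X g → ∀ k ∈ I, B.lam g k ∈ I := by
      intro g hgen'
      induction hgen' with
      | one => intro k hk; rwa [B.lam_one_left]
      | mul ha hb iha ihb =>
        intro k hk
        rw [B.lam_mul]
        exact iha _ (ihb _ hk)
      | inv ha iha => exact hRinv _ iha
      | base x hx =>
        have h := hRinv _ (fun k hk => hbase k hk ⟨x, hx⟩)
        simpa only [B.inv_inv] using h
    exact fun g a ha => hR g (hGen g) a ha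
  have hIideal : B.IsIdeal I := ⟨hIone, hImul, hIinv, hInormal, hIlam⟩
  -- now prove injectivity
  intro u v huv
  by_contra hne'
  -- the element u ∘ v⁻¹ is a nonzero element of I
  set d : A := B.mul u.1 (B.inv v.1) with hddef
  have hdI : d ∈ I := by
    intro w
    rw [Lmul]
    have h1 : f (L (B.inv v.1) w) = f (L (B.inv u.1) w) := by
      rw [show L (B.inv v.1) w = opX v w from (LopX v w).symm,
        show L (B.inv u.1) w = opX u w from (LopX u w).symm, hhom, hhom, huv]
    have := hD u.1 _ _ h1
    rwa [Llaminv] at this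
  have hdne : d ≠ 0 := by
    intro h0
    apply hne'
    apply Subtype.ext
    have : B.mul d v.1 = v.1 := by rw [h0, ← B.one_eq, B.one_mul']
    rw [hddef, B.mul_assoc', B.inv_mul', B.mul_one'] at this
    exact this
  have hIne : I ≠ {0} := by
    intro h
    rw [h] at hdI
    exact hdne hdI
  -- transitivity of I forces Y to be a single point
  have hconst : ∀ w1 w2 : X, f w1 = f w2 := by
    intro w1 w2
    obtain ⟨a, haI, ha⟩ := htr I hIideal hIne w1.1 w1.2 w2.1 w2.2
    have : L a w1 = w2 := Subtype.ext ha
    rw [← this]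
    exact (haI w1).symm
  have : Subsingleton Y := by
    constructor
    intro y1 y2
    obtain ⟨w1, rfl⟩ := hsurj y1
    obtain ⟨w2, rfl⟩ := hsurj y2
    exact hconst w1 w2
  have := Finite.card_le_one_iff_subsingleton.mpr this
  omega

/-- (1) → (2) : if `X` is simple then every nonzero ideal acts transitively. -/
lemma trans_of_simple (B : LeftBrace A)
    (hsoc : {a : A | ∀ b, a + b = B.mul a b} = {0})
    (X : Set A) (hclosed : ∀ a : A, ∀ x ∈ X, B.lam a x ∈ X)
    (hgen : AddSubgroup.closure X = ⊤)
    (opX : X → X → X)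
    (hopX : ∀ x y : X, ((opX x y : X) : A) = B.cop (x : A) (y : A))
    (hsimple : IsSimpleCycleSet opX) :
    ∀ I : Set A, B.IsIdeal I → I ≠ {0} →
      ∀ x ∈ X, ∀ y ∈ X, ∃ a ∈ I, B.lam a x = y := by
  classical
  intro I hI hIne x hx y hy
  by_contra hno
  push_neg at hno
  set L : A → X → X := lamX B X hclosed with hLdef
  have Lval : ∀ (a : A) (u : X), (L a u : A) = B.lam a u.1 := fun a u => rfl
  have Lmul : ∀ (a b : A) (u : X), L (B.mul a b) u = L a (L b u) :=
    fun a b u => Subtype.ext (B.lam_mul a b u.1)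
  have Lone : ∀ u : X, L B.one u = u := fun u => Subtype.ext (B.lam_one_left u.1)
  have Linvlam : ∀ (a : A) (u : X), L (B.inv a) (L a u) = u :=
    fun a u => Subtype.ext (B.lam_inv_lam a u.1)
  have Llaminv : ∀ (a : A) (u : X), L a (L (B.inv a) u) = u :=
    fun a u => Subtype.ext (B.lam_lam_inv a u.1)
  have LopX : ∀ u v : X, opX u v = L (B.inv u.1) v :=
    fun u v => Subtype.ext (by rw [hopX, B.cop_eq]; rfl)
  -- the orbit equivalence relation of I on X
  set r : X → X → Prop := fun u v => ∃ a ∈ I, L a u = v with hrdef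
  have hrefl : ∀ u, r u u := fun u => ⟨B.one, hI.1, Lone u⟩
  have hsymm : ∀ {u v}, r u v → r v u := by
    rintro u v ⟨a, ha, hav⟩
    exact ⟨B.inv a, hI.2.2.1 a ha, by rw [← hav, Linvlam]⟩
  have htrans : ∀ {u v w}, r u v → r v w → r u w := by
    rintro u v w ⟨a, ha, hav⟩ ⟨b, hb, hbw⟩
    exact ⟨B.mul b a, hI.2.1 b hb a ha, by rw [Lmul, hav, hbw]⟩
  set s : Setoid X := ⟨r, fun u => hrefl u, fun h => hsymm h, fun h h' => htrans h h'⟩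
    with hsdef
  -- the quotient solution
  set Y := Quotient s with hYdef
  -- right congruence
  have hright : ∀ (u v v' : X), r v v' → r (opX u v) (opX u v') := by
    rintro u v v' ⟨a, ha, hav⟩
    set c : A := B.mul (B.mul (B.inv u.1) a) (B.inv (B.inv u.1)) with hcdef
    have hcI : c ∈ I := hI.2.2.2.1 (B.inv u.1) a ha
    refine ⟨c, hcI, ?_⟩
    have hca : B.mul c (B.inv u.1) = B.mul (B.inv u.1) a := by
      rw [hcdef, B.mul_assoc', B.inv_mul', B.mul_one']
    rw [LopX, LopX, ← hav, ← Lmul, ← Lmul, hca]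
  -- left congruence
  have hleft : ∀ (u u' v : X), r u u' → r (opX u v) (opX u' v) := by
    rintro u u' v ⟨a, ha, hau⟩
    set sa : A := B.lam (B.inv u'.1) a with hsadef
    have hsaI : sa ∈ I := hI.2.2.2.2 (B.inv u'.1) a ha
    set q : A := B.mul (B.mul (B.inv u.1) (B.inv a)) (B.inv (B.inv u.1)) with hqdef
    have hqI : q ∈ I := hI.2.2.2.1 (B.inv u.1) (B.inv a) (hI.2.2.1 a ha)
    refine ⟨B.mul sa q, hI.2.1 sa hsaI q hqI, ?_⟩
    -- key : inv u' = sa ∘ (u⁻¹ ∘ a⁻¹)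
    have hcar : B.lam a u.1 = u'.1 := congrArg Subtype.val hau
    have hmc : B.mul a u.1 = B.mul u'.1 sa := by
      have h := B.mul_comm_lam a u.1
      rw [hcar] at h
      exact h
    have hinv : B.inv u'.1 = B.mul sa (B.mul (B.inv u.1) (B.inv a)) := by
      have h := congrArg B.inv hmc
      rw [B.mul_inv_rev, B.mul_inv_rev] at h
      have h2 := congrArg (B.mul sa) h
      rw [← B.mul_assoc'] at h2
      have h3 : B.mul sa (B.mul (B.inv sa) (B.inv u'.1)) = B.inv u'.1 := by
        rw [← B.mul_assoc', B.mul_inv', B.one_mul']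
      rw [← B.mul_assoc']
      exact (h2.trans h3).symm
    have hkey : B.mul (B.mul sa q) (B.inv u.1) = B.inv u'.1 := by
      rw [hinv, B.mul_assoc', hqdef, B.mul_assoc', B.inv_mul', B.mul_one']
    rw [LopX, LopX, ← hkey, Lmul (B.mul sa q) (B.inv u.1) v]
  have hwd : ∀ (u v u' v' : X), r u u' → r v v' →
      Quotient.mk s (opX u v) = Quotient.mk s (opX u' v') := by
    intro u v u' v' hu hv
    exact Quotient.sound (htrans (hleft u u' v hu) (hright u' v v' hv))
  set opY : Y → Y → Y :=
    Quotient.lift₂ (fun u v => Quotient.mk s (opX u v))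
      (fun u v u' v' hu hv => hwd u v u' v' hu hv) with hopYdef
  have hhomY : ∀ u v : X, opY (Quotient.mk s u) (Quotient.mk s v) = Quotient.mk s (opX u v) :=
    fun u v => rfl
  -- bijectivity of the quotient maps
  have hbijY : ∀ yq : Y, Function.Bijective (opY yq) := by
    intro yq
    have hsurjY : Function.Surjective (opY yq) := by
      induction yq using Quotient.ind with
      | _ u =>
        intro z
        induction z using Quotient.ind with
        | _ v =>
          refine ⟨Quotient.mk s (L u.1 v), ?_⟩
          rw [hhomY]
          congr 1
          rw [LopX, Linvlam]
    exact ⟨Finite.injective_iff_surjective.mpr hsurjY, hsurjY⟩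
  -- the cycle set law descends
  have hXlaw : ∀ a b c : X, opX (opX a b) (opX a c) = opX (opX b a) (opX b c) := by
    intro a b c
    have hkey : ∀ p q : A, B.mul (B.inv (B.lam (B.inv p) q)) (B.inv p) = B.inv (p + q) := by
      intro p q
      rw [← B.mul_inv_rev, ← B.add_eq_mul]
    apply Subtype.ext
    rw [LopX (opX a b) (opX a c), LopX (opX b a) (opX b c), Lval, Lval,
      LopX a b, LopX a c, LopX b a, LopX b c, Lval, Lval, Lval, Lval,
      ← B.lam_mul, ← B.lam_mul, hkey, hkey, add_comm]
  have hlawY : ∀ p q t : Y, opY (opY p q) (opY p t) = opY (opY q p) (opY q t) := by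
    intro p q t
    induction p using Quotient.ind with
    | _ a =>
      induction q using Quotient.ind with
      | _ b =>
        induction t using Quotient.ind with
        | _ c =>
          show Quotient.mk s (opX (opX a b) (opX a c)) = Quotient.mk s (opX (opX b a) (opX b c))
          rw [hXlaw]
  -- the quotient has more than one element
  have hYcard : 1 < Nat.card Y := by
    rw [Finite.one_lt_card_iff_nontrivial]
    refine ⟨Quotient.mk s ⟨x, hx⟩, Quotient.mk s ⟨y, hy⟩, fun h => ?_⟩
    obtain ⟨a, ha, hxy⟩ := Quotient.exact h
    exact hno a ha (congrArg Subtype.val hxy)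
  -- apply simplicity
  have hbijf := hsimple.2 Y opY hbijY hlawY (Quotient.mk s) (Quotient.mk_surjective)
    (fun u v => (hhomY u v).symm) hYcard
  -- but the quotient map is not injective
  obtain ⟨a, haI, hane⟩ : ∃ a ∈ I, a ≠ 0 := by
    by_contra h
    push_neg at h
    apply hIne
    apply Set.eq_singleton_iff_unique_mem.mpr
    exact ⟨ideal_zero hI, h⟩
  obtain ⟨u, hu⟩ : ∃ u : X, L a u ≠ u := by
    by_contra h
    push_neg at h
    exact hane (B.lam_fix_zero hsoc X hgen a
      (fun z hz => congrArg Subtype.val (h ⟨z, hz⟩)))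
  apply hu
  apply hbijf.1
  exact Quotient.sound (hsymm ⟨a, haI, rfl⟩)

/-- Two transitive ideals intersect nontrivially. -/
lemma inter_ne_bot (B : LeftBrace A) (hcard : 1 < Nat.card A)
    (hsoc : {a : A | ∀ b, a + b = B.mul a b} = {0})
    (X : Set A) (hne : X.Nonempty)
    (hclosed : ∀ a : A, ∀ x ∈ X, B.lam a x ∈ X)
    (hgen : AddSubgroup.closure X = ⊤)
    {I J : Set A} (hI : B.IsIdeal I) (hJ : B.IsIdeal J)
    (hItr : ∀ x ∈ X, ∀ y ∈ X, ∃ a ∈ I, B.lam a x = y)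
    (hJtr : ∀ x ∈ X, ∀ y ∈ X, ∃ a ∈ J, B.lam a x = y) :
    I ∩ J ≠ {0} := by
  intro hIJ
  obtain ⟨x₀, hx₀⟩ := hne
  have hsub : ∀ z ∈ X, z = x₀ := by
    intro z hz
    have hzI : z - x₀ ∈ I := by
      obtain ⟨a, ha, hax⟩ := hItr x₀ hx₀ z hz
      rw [← hax]
      exact ideal_star hI ha x₀
    have hzJ : z - x₀ ∈ J := by
      obtain ⟨a, ha, hax⟩ := hJtr x₀ hx₀ z hz
      rw [← hax]
      exact ideal_star hJ ha x₀
    have : z - x₀ ∈ I ∩ J := ⟨hzI, hzJ⟩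
    rw [hIJ] at this
    have : z - x₀ = 0 := this
    rw [sub_eq_zero] at this
    exact this
  have hzero : ∀ a : A, a = 0 := by
    intro a
    refine B.lam_fix_zero hsoc X hgen a (fun z hz => ?_)
    rw [hsub z hz, hsub (B.lam a x₀) (hclosed a x₀ hx₀)]
  have : Subsingleton A := ⟨fun a b => by rw [hzero a, hzero b]⟩
  have := Finite.card_le_one_iff_subsingleton.mpr this
  omega

/-- Every nonzero ideal contains a minimal nonzero ideal. -/
lemma exists_minimal_ideal (B : LeftBrace A) :
    ∀ L : Set A, B.IsIdeal L → L ≠ {0} →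
      ∃ M : Set A, M ⊆ L ∧ B.IsIdeal M ∧ M ≠ {0} ∧
        ¬ ∃ K : Set A, B.IsIdeal K ∧ {(0 : A)} ⊂ K ∧ K ⊂ M := by
  suffices h : ∀ (n : ℕ) (L : Set A), Set.ncard L = n → B.IsIdeal L → L ≠ {0} →
      ∃ M : Set A, M ⊆ L ∧ B.IsIdeal M ∧ M ≠ {0} ∧
        ¬ ∃ K : Set A, B.IsIdeal K ∧ {(0 : A)} ⊂ K ∧ K ⊂ M by
    intro L hL hLne
    exact h _ L rfl hL hLne
  intro n
  induction n using Nat.strong_induction_on with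
  | _ n ih =>
    intro L hn hL hLne
    by_cases hmin : ∃ K : Set A, B.IsIdeal K ∧ {(0 : A)} ⊂ K ∧ K ⊂ L
    · obtain ⟨K, hK, hK0, hKL⟩ := hmin
      have hKlt : Set.ncard K < n := by
        rw [← hn]
        exact Set.ncard_lt_ncard hKL (Set.toFinite L)
      
      obtain ⟨M, hML, hM⟩ := ih _ hKlt K rfl hK (by
        intro h
        rw [h] at hK0
        exact hK0.2 (le_refl _))
      exact ⟨M, hML.trans hKL.1, hM⟩
    · exact ⟨L, le_refl _, hL, hLne, hmin⟩

/-- (2) ↔ (3). -/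
lemma trans_iff_minimal (B : LeftBrace A) (hcard : 1 < Nat.card A)
    (hsoc : {a : A | ∀ b, a + b = B.mul a b} = {0})
    (X : Set A) (hne : X.Nonempty)
    (hclosed : ∀ a : A, ∀ x ∈ X, B.lam a x ∈ X)
    (hgen : AddSubgroup.closure X = ⊤) :
    (∀ I : Set A, B.IsIdeal I → I ≠ {0} →
        ∀ x ∈ X, ∀ y ∈ X, ∃ a ∈ I, B.lam a x = y) ↔
      (∃ I : Set A,
        (B.IsIdeal I ∧ I ≠ {0} ∧
          ¬ ∃ J : Set A, B.IsIdeal J ∧ {(0 : A)} ⊂ J ∧ J ⊂ I) ∧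
        (∀ J : Set A,
          (B.IsIdeal J ∧ J ≠ {0} ∧
            ¬ ∃ K : Set A, B.IsIdeal K ∧ {(0 : A)} ⊂ K ∧ K ⊂ J) → J = I) ∧
        (∀ x ∈ X, ∀ y ∈ X, ∃ a ∈ I, B.lam a x = y)) := by
  have huniv : (Set.univ : Set A) ≠ {0} := by
    intro h
    have hnt : Nontrivial A := Finite.one_lt_card_iff_nontrivial.mp hcard
    obtain ⟨a, b, hab⟩ := hnt
    apply hab
    have ha : a ∈ (Set.univ : Set A) := trivial
    have hb : b ∈ (Set.univ : Set A) := trivial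
    rw [h] at ha hb
    rw [show a = 0 from ha, show b = 0 from hb]
  constructor
  · intro htr
    obtain ⟨M, _, hM, hMne, hMmin⟩ :=
      B.exists_minimal_ideal Set.univ B.isIdeal_univ huniv
    refine ⟨M, ⟨hM, hMne, hMmin⟩, ?_, htr M hM hMne⟩
    intro J ⟨hJ, hJne, hJmin⟩
    set K := J ∩ M with hKdef
    have hK : B.IsIdeal K := isIdeal_inter hJ hM
    have hKne : K ≠ {0} :=
      inter_ne_bot B hcard hsoc X hne hclosed hgen hJ hM
        (htr J hJ hJne) (htr M hM hMne)
    have hK0 : {(0 : A)} ⊂ K := by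
      constructor
      · intro z hz
        rw [show z = 0 from hz]
        exact ⟨ideal_zero hJ, ideal_zero hM⟩
      · intro hsub
        apply hKne
        apply Set.Subset.antisymm ?_ ?_
        · exact fun z hz => hsub hz
        · intro z hz
          rw [show z = 0 from hz]
          exact ⟨ideal_zero hJ, ideal_zero hM⟩
    have hKJ : K = J := by
      by_contra hKJ
      exact hJmin ⟨K, hK, hK0, Set.ssubset_iff_subset_ne.mpr ⟨Set.inter_subset_left, hKJ⟩⟩
    have hKM : K = M := by
      by_contra hKM
      exact hMmin ⟨K, hK, hK0, Set.ssubset_iff_subset_ne.mpr ⟨Set.inter_subset_right, hKM⟩⟩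
    rw [← hKJ, hKM]
  · rintro ⟨I, ⟨hI, hIne, _⟩, huniq, hItr⟩ L hL hLne x hx y hy
    obtain ⟨M, hML, hM, hMne, hMmin⟩ := B.exists_minimal_ideal L hL hLne
    have : M = I := huniq M ⟨hM, hMne, hMmin⟩
    obtain ⟨a, haI, ha⟩ := hItr x hx y hy
    exact ⟨a, hML (this ▸ haI), ha⟩

end Main


end LeftBrace

theorem stmt11 {A : Type u} [AddCommGroup A] [Finite A] (B : LeftBrace A)
    (hcard : 1 < Nat.card A)
    -- Soc(B) = {0}
    (hsoc : {a : A | ∀ b, a + b = B.mul a b} = {0})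
    -- X is a transitive cycle base: an orbit of the λ-action generating (A, +)
    (X : Set A) (hne : X.Nonempty)
    (hclosed : ∀ a : A, ∀ x ∈ X, B.lam a x ∈ X)
    (horbit : ∀ x ∈ X, ∀ y ∈ X, ∃ a : A, B.lam a x = y)
    (hgen : AddSubgroup.closure X = ⊤)
    -- the cycle set operation on X, x · y = λ_x⁻¹(y)
    (opX : X → X → X)
    (hopX : ∀ x y : X, ((opX x y : X) : A) = B.cop (x : A) (y : A)) :
    -- (1) ↔ (2)
    (IsSimpleCycleSet opX ↔
      ∀ I : Set A, B.IsIdeal I → I ≠ {0} →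
        ∀ x ∈ X, ∀ y ∈ X, ∃ a ∈ I, B.lam a x = y) ∧
    -- (1) ↔ (3)
    (IsSimpleCycleSet opX ↔
      ∃ I : Set A,
        (B.IsIdeal I ∧ I ≠ {0} ∧
          ¬ ∃ J : Set A, B.IsIdeal J ∧ {(0 : A)} ⊂ J ∧ J ⊂ I) ∧
        (∀ J : Set A,
          (B.IsIdeal J ∧ J ≠ {0} ∧
            ¬ ∃ K : Set A, B.IsIdeal K ∧ {(0 : A)} ⊂ K ∧ K ⊂ J) → J = I) ∧
        (∀ x ∈ X, ∀ y ∈ X, ∃ a ∈ I, B.lam a x = y)) := by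
  refine ⟨⟨LeftBrace.trans_of_simple B hsoc X hclosed hgen opX hopX,
    fun htr => LeftBrace.simple_of_trans B hsoc X hclosed hgen opX hopX hcard htr⟩, ?_⟩
  exact Iff.trans
    ⟨LeftBrace.trans_of_simple B hsoc X hclosed hgen opX hopX,
      fun htr => LeftBrace.simple_of_trans B hsoc X hclosed hgen opX hopX hcard htr⟩
    (LeftBrace.trans_iff_minimal B hcard hsoc X hne hclosed hgen)
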